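/- In so(𝕆), left multiplications satisfy [L_i, L_j]|_ℍ = 2L_k|_ℍ and [L_i, L_j]|_{ℍε} = −2L_k|_{ℍε}, where 𝕆 = ℍ ⊕ ℍε. -/

import Mathlib

open scoped Quaternion

noncomputable section

/-- The octonions, via the Cayley–Dickson construction `𝕆 = ℍ ⊕ ℍ`. -/
abbrev Oct : Type := ℍ[ℝ] × ℍ[ℝ]

/-- Octonion multiplication (Cayley–Dickson). -/
def omul (x y : Oct) : Oct :=
  (x.1 * y.1 - star y.2 * x.2, y.2 * x.1 + x.2 * star y.1)

/-- Left multiplication `L_q` as a real-linear endomorphism of `𝕆`. -/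
def Lo (q : Oct) : Oct →ₗ[ℝ] Oct where
  toFun y := omul q y
  map_add' y z := by
    simp only [omul, Prod.fst_add, Prod.snd_add, star_add, mul_add, add_mul,
      Prod.mk_add_mk, Prod.mk.injEq]
    constructor <;> abel
  map_smul' c y := by
    simp only [omul, Prod.smul_fst, Prod.smul_snd, Quaternion.star_smul,
      mul_smul_comm, smul_mul_assoc, RingHom.id_apply, Prod.smul_mk, smul_sub,
      smul_add, Prod.mk.injEq]

/-- Right multiplication `R_q` as a real-linear endomorphism of `𝕆`. -/
def Ro (q : Oct) : Oct →ₗ[ℝ] Oct where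
  toFun y := omul y q
  map_add' y z := by
    simp only [omul, Prod.fst_add, Prod.snd_add, star_add, mul_add, add_mul,
      Prod.mk_add_mk, Prod.mk.injEq]
    constructor <;> abel
  map_smul' c y := by
    simp only [omul, Prod.smul_fst, Prod.smul_snd, Quaternion.star_smul,
      mul_smul_comm, smul_mul_assoc, RingHom.id_apply, Prod.smul_mk, smul_sub,
      smul_add, Prod.mk.injEq]

/-- The imaginary octonions. -/
def ImO : Set Oct := {x | x.1.re = 0}

/-- A derivation of the octonions (an element of `g₂ ⊂ so(8)`). -/
def IsOctDer (D : Oct →ₗ[ℝ] Oct) : Prop :=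
  ∀ x y : Oct, D (omul x y) = omul (D x) y + omul x (D y)

/-- The standard inner product on `𝕆 = ℍ ⊕ ℍ`. -/
def innO (x y : Oct) : ℝ := inner ℝ x.1 y.1 + inner ℝ x.2 y.2

/-- Membership in `so(8) = so(𝕆)`: skew-symmetry with respect to `innO`. -/
def IsSkewO (A : Oct →ₗ[ℝ] Oct) : Prop :=
  ∀ x y : Oct, innO (A x) y = - innO x (A y)


/-- The quaternion units inside `𝕆 = ℍ ⊕ ℍε`. -/
def oi : Oct := ((⟨0, 1, 0, 0⟩ : ℍ[ℝ]), 0)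
def oj : Oct := ((⟨0, 0, 1, 0⟩ : ℍ[ℝ]), 0)
def ok : Oct := ((⟨0, 0, 0, 1⟩ : ℍ[ℝ]), 0)

/-- In `so(𝕆)`, with the Cayley–Dickson decomposition `𝕆 = ℍ ⊕ ℍε`,
the commutator of the left multiplications by `i` and `j` equals `2·L_k` on `ℍ` and
`-2·L_k` on `ℍε`. -/
theorem stmt7 :
    (∀ a : ℍ[ℝ], ⁅Lo oi, Lo oj⁆ ((a, 0) : Oct) = (2 : ℝ) • Lo ok ((a, 0) : Oct)) ∧
    (∀ a : ℍ[ℝ], ⁅Lo oi, Lo oj⁆ ((0, a) : Oct) = -((2 : ℝ) • Lo ok ((0, a) : Oct))) := by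
  have hi : oi.1.re = 0 ∧ oi.1.imI = 1 ∧ oi.1.imJ = 0 ∧ oi.1.imK = 0 ∧ oi.2 = 0 :=
    ⟨rfl, rfl, rfl, rfl, rfl⟩
  have hj : oj.1.re = 0 ∧ oj.1.imI = 0 ∧ oj.1.imJ = 1 ∧ oj.1.imK = 0 ∧ oj.2 = 0 :=
    ⟨rfl, rfl, rfl, rfl, rfl⟩
  have hk : ok.1.re = 0 ∧ ok.1.imI = 0 ∧ ok.1.imJ = 0 ∧ ok.1.imK = 1 ∧ ok.2 = 0 :=
    ⟨rfl, rfl, rfl, rfl, rfl⟩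
  obtain ⟨hi1, hi2, hi3, hi4, hi5⟩ := hi
  obtain ⟨hj1, hj2, hj3, hj4, hj5⟩ := hj
  obtain ⟨hk1, hk2, hk3, hk4, hk5⟩ := hk
  constructor <;> intro a <;>
    · simp only [Ring.lie_def, LinearMap.sub_apply, Module.End.mul_apply, Lo, omul, hi5, hj5, hk5,
        LinearMap.coe_mk, AddHom.coe_mk, LinearMap.smul_apply, Prod.smul_mk, Prod.neg_mk, Prod.mk_sub_mk,
        Prod.mk.injEq]
      constructor <;>
        · ext <;>
            simp [Quaternion.ext_iff, Quaternion.re_mul, Quaternion.imI_mul, Quaternion.imJ_mul,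
              Quaternion.imK_mul, hi1, hi2, hi3, hi4, hj1, hj2, hj3, hj4, hk1, hk2, hk3, hk4] <;> ring

end
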